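/- The Kesten–McKay squared-singular-value density ρ(λ) = d√(4(d−1) − dλ)/(2π(d−λ)√(dλ)) on the interval [0, 4(d−1)/d] integrates to 1, i.e., it is a probability density. -/

import Mathlib

open Real Set

private lemma km_alg1 {p q r t s : ℝ}
    (hppos : 0 < p) (hqpos : 0 < q) (hrpos : 0 < r) (htpos : 0 < t) (hspos : 0 < s)
    (hq2' : q^2 = t^2 - p^2) (hr2' : r^2 = s^2 - p^2)
    (had' : t^2 * s^2 = 4*(s^2-1)) :
    1 - ((s^2-2) * p / (t * s * r))^2 = (s*q/(t*r))^2 := by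
  field_simp
  linear_combination s^2*t^2*hr2' - s^4*hq2' - p^2*had'

private lemma km_alg2 {p q r t s : ℝ}
    (hppos : 0 < p) (hqpos : 0 < q) (hrpos : 0 < r) (htpos : 0 < t) (hspos : 0 < s)
    (hq2' : q^2 = t^2 - p^2) (hr2' : r^2 = s^2 - p^2)
    (had' : t^2 * s^2 = 4*(s^2-1)) :
    1 / (s*q/(t*r)) * (((s^2-2) * (1/(2*p)) * (t * s * r)
      - (s^2-2) * p * (t * s * (-1/(2*r)))) / (t * s * r)^2)
    = (s^2-2) / (2*p*q*r^2) := by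
  field_simp
  linear_combination (s^2-2)*hr2'

private lemma km_alg3 {p q r t s : ℝ}
    (hppos : 0 < p) (hqpos : 0 < q) (hrpos : 0 < r) (htpos : 0 < t) (hspos : 0 < s)
    (hq2' : q^2 = t^2 - p^2) (hr2' : r^2 = s^2 - p^2)
    (had' : t^2 * s^2 = 4*(s^2-1)) :
    (1/π) * (s^2 * (1/(2*p*q)) - (s^2-2) * ((s^2-2) / (2*p*q*r^2)))
    = s^2 * (s * q) / (2 * π * r^2 * (s * p)) := by
  have hπ : 0 < π := Real.pi_pos
  field_simp
  linear_combination s^2*hr2' - s^2*hq2' - had'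

noncomputable def KMF (d : ℕ) (x : ℝ) : ℝ :=
  (1/π) * ((d : ℝ) * Real.arcsin (Real.sqrt (x / (4 * ((d:ℝ)-1) / d)))
    - ((d:ℝ) - 2) * Real.arcsin (((d:ℝ)-2) * Real.sqrt x /
        (Real.sqrt (4 * ((d:ℝ)-1)) * Real.sqrt ((d:ℝ) - x))))

lemma KMF_deriv (d : ℕ) (hd : 2 ≤ d) {lam : ℝ} (h0 : 0 < lam)
    (hla : lam < 4 * ((d:ℝ)-1) / d) :
    HasDerivAt (KMF d)
      ((d:ℝ) * Real.sqrt (4 * ((d : ℝ) - 1) - d * lam) /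
          (2 * π * ((d : ℝ) - lam) * Real.sqrt (d * lam))) lam := by
  have hd2 : (2:ℝ) ≤ (d:ℝ) := by exact_mod_cast hd
  have hdpos : (0:ℝ) < d := by linarith
  have hd1 : (0:ℝ) < (d:ℝ) - 1 := by linarith
  set a : ℝ := 4 * ((d:ℝ)-1) / d with ha
  have hapos : 0 < a := by rw [ha]; positivity
  have had : a * d = 4 * ((d:ℝ)-1) := by rw [ha]; field_simp
  have haled : a ≤ (d:ℝ) := by rw [ha, div_le_iff₀ hdpos]; nlinarith
  have hlamd : lam < (d:ℝ) := lt_of_lt_of_le hla haled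
  set p := Real.sqrt lam with hp
  set q := Real.sqrt (a - lam) with hq
  set r := Real.sqrt ((d:ℝ) - lam) with hr
  set t := Real.sqrt a with ht
  set s := Real.sqrt (d:ℝ) with hs
  have hppos : 0 < p := Real.sqrt_pos.mpr h0
  have hqpos : 0 < q := Real.sqrt_pos.mpr (by linarith)
  have hrpos : 0 < r := Real.sqrt_pos.mpr (by linarith)
  have htpos : 0 < t := Real.sqrt_pos.mpr hapos
  have hspos : 0 < s := Real.sqrt_pos.mpr hdpos
  have hp2 : p^2 = lam := Real.sq_sqrt h0.le
  have hq2 : q^2 = a - lam := Real.sq_sqrt (by linarith)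
  have hr2 : r^2 = (d:ℝ) - lam := Real.sq_sqrt (by linarith)
  have ht2 : t^2 = a := Real.sq_sqrt hapos.le
  have hs2 : s^2 = (d:ℝ) := Real.sq_sqrt hdpos.le
  have hq2' : q^2 = t^2 - p^2 := by rw [hq2, ht2, hp2]
  have hr2' : r^2 = s^2 - p^2 := by rw [hr2, hs2, hp2]
  have had' : t^2 * s^2 = 4*(s^2-1) := by rw [ht2, hs2]; linarith [had]
  have hw : Real.sqrt (4*((d:ℝ)-1)) = t * s := by
    rw [← had, ht, hs, Real.sqrt_mul hapos.le]
  have hπ : (0:ℝ) < π := Real.pi_pos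
  -- term 1
  have hquo : Real.sqrt (lam/a) = p/t := Real.sqrt_div h0.le a
  have hu : HasDerivAt (fun x : ℝ => x / a) (1/a) lam := by
    simpa using (hasDerivAt_id lam).div_const a
  have hsu : HasDerivAt (fun x : ℝ => Real.sqrt (x/a)) ((1/a) / (2 * Real.sqrt (lam/a))) lam :=
    hu.sqrt (by positivity)
  have hlt1 : Real.sqrt (lam/a) < 1 := by
    rw [show (1:ℝ) = Real.sqrt 1 by simp]
    exact Real.sqrt_lt_sqrt (by positivity) (by rw [div_lt_one hapos]; exact hla)
  have hne1 : Real.sqrt (lam/a) ≠ -1 :=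
    ne_of_gt (lt_of_lt_of_le neg_one_lt_zero (Real.sqrt_nonneg _))
  have h1 : HasDerivAt (fun x : ℝ => Real.arcsin (Real.sqrt (x/a)))
      (1 / Real.sqrt (1 - Real.sqrt (lam/a)^2) * ((1/a) / (2 * Real.sqrt (lam/a)))) lam :=
    by have := (Real.hasDerivAt_arcsin hne1 (ne_of_lt hlt1)).comp lam hsu; exact this
  have hsq1 : Real.sqrt (1 - Real.sqrt (lam/a)^2) = q/t := by
    rw [Real.sq_sqrt (by positivity), show 1 - lam/a = (a-lam)/a by field_simp]
    exact Real.sqrt_div (by linarith) a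
  have hD1 : 1 / Real.sqrt (1 - Real.sqrt (lam/a)^2) * ((1/a) / (2 * Real.sqrt (lam/a)))
      = 1 / (2*p*q) := by
    rw [hsq1, hquo, ← ht2]
    field_simp
  -- term 2
  have hn : HasDerivAt (fun x : ℝ => ((d:ℝ)-2) * Real.sqrt x) (((d:ℝ)-2) * (1/(2*p))) lam := by
    rw [hp]
    exact (Real.hasDerivAt_sqrt h0.ne').const_mul _
  have hdsub : HasDerivAt (fun x : ℝ => (d:ℝ) - x) (-1) lam := by
    simpa using (hasDerivAt_id' lam).const_sub (d:ℝ)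
  have hrr : HasDerivAt (fun x : ℝ => Real.sqrt ((d:ℝ) - x)) (-1/(2*r)) lam := by
    rw [hr]
    exact hdsub.sqrt (show (d:ℝ) - lam ≠ 0 from ne_of_gt (by linarith))
  have hm : HasDerivAt (fun x : ℝ => Real.sqrt (4*((d:ℝ)-1)) * Real.sqrt ((d:ℝ) - x))
      (Real.sqrt (4*((d:ℝ)-1)) * (-1/(2*r))) lam := hrr.const_mul _
  have hmlam : Real.sqrt (4*((d:ℝ)-1)) * Real.sqrt ((d:ℝ) - lam) = t * s * r := by
    rw [hw, ← hr]
  have hmne : Real.sqrt (4*((d:ℝ)-1)) * Real.sqrt ((d:ℝ) - lam) ≠ 0 := by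
    rw [hmlam]
    exact ne_of_gt (by positivity)
  have hgfun : HasDerivAt (fun x : ℝ => ((d:ℝ)-2) * Real.sqrt x /
      (Real.sqrt (4*((d:ℝ)-1)) * Real.sqrt ((d:ℝ) - x)))
      (((((d:ℝ)-2) * (1/(2*p))) * (Real.sqrt (4*((d:ℝ)-1)) * Real.sqrt ((d:ℝ) - lam))
        - (((d:ℝ)-2) * Real.sqrt lam) * (Real.sqrt (4*((d:ℝ)-1)) * (-1/(2*r))))
        / (Real.sqrt (4*((d:ℝ)-1)) * Real.sqrt ((d:ℝ) - lam))^2) lam := hn.div hm hmne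
  have hgval : ((d:ℝ)-2) * Real.sqrt lam /
      (Real.sqrt (4*((d:ℝ)-1)) * Real.sqrt ((d:ℝ) - lam)) = (s^2-2) * p / (t * s * r) := by
    rw [hmlam, ← hp, hs2]
  have h1g : 1 - ((s^2-2) * p / (t * s * r))^2 = (s*q/(t*r))^2 :=
    km_alg1 hppos hqpos hrpos htpos hspos hq2' hr2' had'
  have hs22 : (0:ℝ) ≤ s^2 - 2 := by rw [hs2]; linarith
  have hgnonneg : (0:ℝ) ≤ (s^2-2) * p / (t * s * r) :=
    div_nonneg (mul_nonneg hs22 hppos.le) (by positivity)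
  have hgsqlt : ((s^2-2) * p / (t * s * r))^2 < 1 := by
    have hpos2 : 0 < (s*q/(t*r))^2 := by positivity
    linarith [h1g]
  have habs := abs_lt.mp ((sq_lt_one_iff_abs_lt_one _).mp hgsqlt)
  have hglt1 : (s^2-2) * p / (t * s * r) < 1 := habs.2
  have hgne1 : (s^2-2) * p / (t * s * r) ≠ -1 := ne_of_gt habs.1
  have h2 : HasDerivAt (fun x : ℝ => Real.arcsin (((d:ℝ)-2) * Real.sqrt x /
      (Real.sqrt (4*((d:ℝ)-1)) * Real.sqrt ((d:ℝ) - x))))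
      (1 / Real.sqrt (1 - ((s^2-2) * p / (t * s * r))^2) *
        (((((d:ℝ)-2) * (1/(2*p))) * (Real.sqrt (4*((d:ℝ)-1)) * Real.sqrt ((d:ℝ) - lam))
        - (((d:ℝ)-2) * Real.sqrt lam) * (Real.sqrt (4*((d:ℝ)-1)) * (-1/(2*r))))
        / (Real.sqrt (4*((d:ℝ)-1)) * Real.sqrt ((d:ℝ) - lam))^2)) lam := by
    have harc := Real.hasDerivAt_arcsin (x := ((s^2-2) * p / (t * s * r))) hgne1 (ne_of_lt hglt1)
    rw [← hgval] at harc
    have := harc.comp lam hgfun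
    rw [hgval] at this
    exact this
  have hD2 : 1 / Real.sqrt (1 - ((s^2-2) * p / (t * s * r))^2) *
        (((((d:ℝ)-2) * (1/(2*p))) * (Real.sqrt (4*((d:ℝ)-1)) * Real.sqrt ((d:ℝ) - lam))
        - (((d:ℝ)-2) * Real.sqrt lam) * (Real.sqrt (4*((d:ℝ)-1)) * (-1/(2*r))))
        / (Real.sqrt (4*((d:ℝ)-1)) * Real.sqrt ((d:ℝ) - lam))^2)
      = ((d:ℝ)-2) / (2*p*q*((d:ℝ)-lam)) := by
    have hsq2 : Real.sqrt (1 - ((s^2-2) * p / (t * s * r))^2) = s*q/(t*r) := by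
      rw [h1g, Real.sqrt_sq (by positivity)]
    rw [hsq2, hmlam, ← hp, hw, ← hr2, show ((d:ℝ)) = s^2 from hs2.symm]
    exact km_alg2 hppos hqpos hrpos htpos hspos hq2' hr2' had'
  -- combine
  have hF : HasDerivAt (KMF d)
      ((1/π) * ((d:ℝ) * (1/(2*p*q)) - ((d:ℝ)-2) * (((d:ℝ)-2) / (2*p*q*((d:ℝ)-lam))))) lam := by
    rw [← hD1, ← hD2]
    exact (((h1.const_mul (d:ℝ)).sub (h2.const_mul ((d:ℝ)-2)))).const_mul (1/π)
  have hsq3 : Real.sqrt (4 * ((d:ℝ)-1) - d * lam) = s * q := by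
    rw [show 4*((d:ℝ)-1) - d*lam = (d:ℝ)*(a-lam) by rw [ha]; field_simp,
      Real.sqrt_mul hdpos.le, ← hs, ← hq]
  have hsq4 : Real.sqrt ((d:ℝ) * lam) = s * p := by
    rw [Real.sqrt_mul hdpos.le, ← hs, ← hp]
  have hval : (1/π) * ((d:ℝ) * (1/(2*p*q)) - ((d:ℝ)-2) * (((d:ℝ)-2) / (2*p*q*((d:ℝ)-lam))))
      = (d:ℝ) * Real.sqrt (4 * ((d : ℝ) - 1) - d * lam) /
          (2 * π * ((d : ℝ) - lam) * Real.sqrt (d * lam)) := by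
    rw [hsq3, hsq4, ← hr2, show ((d:ℝ)) = s^2 from hs2.symm]
    exact km_alg3 hppos hqpos hrpos htpos hspos hq2' hr2' had'
  rw [← hval]
  exact hF

lemma KMF_cont (d : ℕ) (hd : 2 ≤ d) :
    ContinuousOn (KMF d) (Set.Icc 0 (4*((d:ℝ)-1)/d)) := by
  have hd2 : (2:ℝ) ≤ (d:ℝ) := by exact_mod_cast hd
  have hdpos : (0:ℝ) < d := by linarith
  have hA : Continuous (fun x : ℝ => (d:ℝ) * Real.arcsin (Real.sqrt (x / (4 * ((d:ℝ)-1) / d)))) :=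
    continuous_const.mul (Real.continuous_arcsin.comp (Real.continuous_sqrt.comp (continuous_id.div_const _)))
  have hB : ContinuousOn (fun x : ℝ => ((d:ℝ)-2) * Real.arcsin (((d:ℝ)-2) * Real.sqrt x /
      (Real.sqrt (4 * ((d:ℝ)-1)) * Real.sqrt ((d:ℝ) - x)))) (Set.Icc 0 (4*((d:ℝ)-1)/d)) := by
    rcases eq_or_lt_of_le hd2 with h2 | h2
    · have : (fun x : ℝ => ((d:ℝ)-2) * Real.arcsin (((d:ℝ)-2) * Real.sqrt x /
          (Real.sqrt (4 * ((d:ℝ)-1)) * Real.sqrt ((d:ℝ) - x)))) = fun _ => 0 := by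
        funext x
        rw [← h2]
        norm_num
      rw [this]
      exact continuousOn_const
    · have halt : 4*((d:ℝ)-1)/d < (d:ℝ) := by
        rw [div_lt_iff₀ hdpos]; nlinarith
      apply ContinuousOn.mul continuousOn_const
      apply Real.continuous_arcsin.comp_continuousOn
      apply ContinuousOn.div
      · exact (continuous_const.mul Real.continuous_sqrt).continuousOn
      · exact (continuous_const.mul (Real.continuous_sqrt.comp
          (continuous_const.sub continuous_id))).continuousOn
      · intro x hx
        have hxd : x < (d:ℝ) := lt_of_le_of_lt hx.2 halt
        have h1 : (0:ℝ) < Real.sqrt (4*((d:ℝ)-1)) := Real.sqrt_pos.mpr (by linarith)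
        have h2' : (0:ℝ) < Real.sqrt ((d:ℝ) - x) := Real.sqrt_pos.mpr (by linarith)
        positivity
  exact continuousOn_const.mul (hA.continuousOn.sub hB)

lemma KMF_zero (d : ℕ) (hd : 2 ≤ d) : KMF d 0 = 0 := by
  simp [KMF]

lemma KMF_top (d : ℕ) (hd : 2 ≤ d) : KMF d (4*((d:ℝ)-1)/d) = 1 := by
  have hd2 : (2:ℝ) ≤ (d:ℝ) := by exact_mod_cast hd
  have hdpos : (0:ℝ) < d := by linarith
  have hd1 : (0:ℝ) < (d:ℝ) - 1 := by linarith
  set a : ℝ := 4 * ((d:ℝ)-1) / d with ha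
  have hapos : 0 < a := by rw [ha]; positivity
  have h1 : Real.sqrt (a / a) = 1 := by
    rw [div_self hapos.ne', Real.sqrt_one]
  have h2 : ((d:ℝ)-2) * Real.arcsin (((d:ℝ)-2) * Real.sqrt a /
      (Real.sqrt (4 * ((d:ℝ)-1)) * Real.sqrt ((d:ℝ) - a))) = ((d:ℝ)-2) * (π/2) := by
    rcases eq_or_lt_of_le hd2 with h2 | h2
    · rw [← h2]; norm_num
    · congr 1
      have hda : (d:ℝ) - a = ((d:ℝ)-2)^2 / d := by rw [ha]; field_simp; ring
      have hsda : Real.sqrt ((d:ℝ) - a) = ((d:ℝ)-2) / Real.sqrt d := by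
        rw [hda, Real.sqrt_div (sq_nonneg _), Real.sqrt_sq (by linarith)]
      have hw : Real.sqrt (4*((d:ℝ)-1)) = Real.sqrt a * Real.sqrt d := by
        rw [← Real.sqrt_mul hapos.le, ha]
        congr 1
        field_simp
      have harg : ((d:ℝ)-2) * Real.sqrt a /
          (Real.sqrt (4 * ((d:ℝ)-1)) * Real.sqrt ((d:ℝ) - a)) = 1 := by
        have h3 : (0:ℝ) < Real.sqrt a := Real.sqrt_pos.mpr hapos
        have h4 : (0:ℝ) < Real.sqrt d := Real.sqrt_pos.mpr hdpos
        rw [hw, hsda, mul_assoc, mul_comm (Real.sqrt (d:ℝ)), div_mul_cancel₀ _ h4.ne']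
        rw [mul_comm (Real.sqrt a)]
        exact div_self (ne_of_gt (mul_pos (by linarith) h3))
      rw [harg, Real.arcsin_one]
  rw [KMF, ← ha, h1, Real.arcsin_one, h2]
  have hπ : π ≠ 0 := Real.pi_ne_zero
  field_simp
  ring


open MeasureTheory in
/-- The Kesten–McKay squared-singular-value density
`ρ(λ) = d√(4(d-1) - dλ) / (2π(d-λ)√(dλ))` on `(0, 4(d-1)/d)` (and `0` elsewhere)
integrates to `1`. -/
theorem kesten_mckay_integrates_to_one (d : ℕ) (hd : 2 ≤ d) :
    ∫ lam : ℝ,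
      (if lam ∈ Set.Ioo (0 : ℝ) (4 * ((d : ℝ) - 1) / d) then
        d * Real.sqrt (4 * ((d : ℝ) - 1) - d * lam) /
          (2 * π * ((d : ℝ) - lam) * Real.sqrt (d * lam))
      else 0) = 1 := by
  have hd2 : (2:ℝ) ≤ (d:ℝ) := by exact_mod_cast hd
  set a : ℝ := 4 * ((d:ℝ)-1) / d with ha
  have hdpos : (0:ℝ) < d := by linarith
  have hd1 : (0:ℝ) < (d:ℝ) - 1 := by linarith
  have hapos : 0 < a := by rw [ha]; positivity
  set f : ℝ → ℝ := fun lam => d * Real.sqrt (4 * ((d : ℝ) - 1) - d * lam) /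
          (2 * π * ((d : ℝ) - lam) * Real.sqrt (d * lam)) with hf
  have key : ∫ lam : ℝ, (if lam ∈ Set.Ioo (0 : ℝ) a then f lam else 0)
      = ∫ lam in (0:ℝ)..a, f lam := by
    rw [intervalIntegral.integral_of_le hapos.le, MeasureTheory.integral_Ioc_eq_integral_Ioo,
      ← MeasureTheory.integral_indicator measurableSet_Ioo]
    congr 1
    ext x
    rw [Set.indicator_apply]
  rw [key]
  have hcont : ContinuousOn (KMF d) (Set.Icc 0 a) := KMF_cont d hd
  have hderiv : ∀ x ∈ Set.Ioo (0:ℝ) a, HasDerivAt (KMF d) (f x) x :=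
    fun x hx => KMF_deriv d hd hx.1 hx.2
  have hpos : ∀ x ∈ Set.Ioo (0:ℝ) a, 0 ≤ f x := by
    intro x hx
    have h1 : x < (d:ℝ) := by
      have : a ≤ d := by
        rw [ha, div_le_iff₀ hdpos]; nlinarith
      linarith [hx.2]
    have : (0:ℝ) < (d:ℝ) - x := by linarith
    have hπ : (0:ℝ) < π := Real.pi_pos
    positivity
  have hint : IntervalIntegrable f volume 0 a := by
    apply intervalIntegral.intervalIntegrable_deriv_of_nonneg
    · rwa [Set.uIcc_of_le hapos.le]
    · rwa [min_eq_left hapos.le, max_eq_right hapos.le]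
    · rwa [min_eq_left hapos.le, max_eq_right hapos.le]
  rw [intervalIntegral.integral_eq_sub_of_hasDerivAt_of_le hapos.le hcont hderiv hint]
  rw [ha, KMF_zero d hd, KMF_top d hd, sub_zero]
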